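/- (Riesz product identity) Let Φ_m(x_1, x_2) := ∏_{k=0}^m (1 + cos(4^k x_1) cos(4^{m-k} x_2)). Then Φ_m ≥ 0 everywhere, its mean value over the 2-torus equals 1 (hence ‖Φ_m‖_1 = 1), and Φ_m(x) = 1 + ∑_{k=0}^{m} cos(4^k x_1) cos(4^{m-k} x_2) + t_m(x), where t_m has all its nonzero Fourier coefficients at frequencies k = (k_1, k_2) with max{|k_1|, 1} · max{|k_2|, 1} > 4^m. -/

import Mathlib

open intervalIntegral

/-- The Riesz product `Φ_m(x) = ∏_{k=0}^m (1 + cos(4^k x_1) cos(4^{m-k} x_2))`. -/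
noncomputable def rieszProd (m : ℕ) (x : ℝ × ℝ) : ℝ :=
  ∏ k ∈ Finset.range (m + 1), (1 + Real.cos (4 ^ k * x.1) * Real.cos (4 ^ (m - k) * x.2))

namespace Stmt18Aux

/-- Orthogonality of exponentials. -/
lemma integral_exp_int (n : ℤ) :
    (∫ x in (-Real.pi)..Real.pi, Complex.exp ((n : ℂ) * x * Complex.I)) =
      if n = 0 then (2 * Real.pi : ℂ) else 0 := by
  split_ifs with h
  · subst h
    simp [intervalIntegral.integral_const]
    ring
  · have hc : (n : ℂ) * Complex.I ≠ 0 := by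
      apply mul_ne_zero
      · exact_mod_cast (Int.cast_ne_zero (α := ℂ)).mpr h
      · exact Complex.I_ne_zero
    have hrw : ∀ x : ℝ, (n : ℂ) * x * Complex.I = ((n : ℂ) * Complex.I) * x := by
      intro x; ring
    simp only [hrw]
    rw [integral_exp_mul_complex hc]
    have h1 : Complex.exp ((n:ℂ) * Complex.I * (Real.pi : ℝ))
        = Complex.exp ((n:ℂ) * Complex.I * ((-Real.pi : ℝ) : ℝ)) := by
      rw [show ((n:ℂ) * Complex.I * ((Real.pi : ℝ) : ℂ))
          = (n:ℂ) * Complex.I * (((-Real.pi : ℝ) : ℝ) : ℂ) + (n : ℂ) * (2 * Real.pi * Complex.I) by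
        push_cast; ring]
      rw [Complex.exp_add, Complex.exp_int_mul_two_pi_mul_I, mul_one]
    rw [h1, sub_self, zero_div]

lemma intProdCos (n : ℕ → ℕ) (T : Finset ℕ) (κ : ℤ)
    (h : ∀ ε : ℕ → ℤ, (∀ k ∈ T, ε k = 1 ∨ ε k = -1) → κ ≠ ∑ k ∈ T, ε k * ((n k : ℕ) : ℤ)) :
    (∫ x in (-Real.pi)..Real.pi,
      (∏ k ∈ T, (Real.cos ((n k : ℝ) * x) : ℂ)) *
        Complex.exp (-((κ : ℂ) * x) * Complex.I)) = 0 := by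
  induction T using Finset.induction generalizing κ with
  | empty =>
    have hκ : κ ≠ 0 := fun h0 => h (fun _ => 1) (by simp) (by simp [h0])
    have key := integral_exp_int (-κ)
    rw [if_neg (by simpa using hκ)] at key
    rw [← key]
    apply intervalIntegral.integral_congr
    intro x _
    simp only [Finset.prod_empty, one_mul]
    congr 1
    push_cast; ring
  | @insert a s ha ih =>
    have key : ∀ x : ℝ,
        (∏ k ∈ insert a s, (Real.cos ((n k : ℝ) * x) : ℂ)) *
          Complex.exp (-((κ : ℂ) * x) * Complex.I)
        = (1/2 : ℂ) * ((∏ k ∈ s, (Real.cos ((n k : ℝ) * x) : ℂ)) *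
              Complex.exp (-(((κ - (n a : ℤ) : ℤ) : ℂ) * x) * Complex.I))
          + (1/2 : ℂ) * ((∏ k ∈ s, (Real.cos ((n k : ℝ) * x) : ℂ)) *
              Complex.exp (-(((κ + (n a : ℤ) : ℤ) : ℂ) * x) * Complex.I)) := by
      intro x
      rw [Finset.prod_insert ha, Complex.ofReal_cos, Complex.cos]
      rw [show (-(((κ - (n a : ℤ) : ℤ) : ℂ) * x) * Complex.I)
          = ((((n a : ℝ) * x : ℝ) : ℂ) * Complex.I) + (-((κ : ℂ) * x) * Complex.I) by
        push_cast; ring]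
      rw [show (-(((κ + (n a : ℤ) : ℤ) : ℂ) * x) * Complex.I)
          = (-(((n a : ℝ) * x : ℝ) : ℂ) * Complex.I) + (-((κ : ℂ) * x) * Complex.I) by
        push_cast; ring]
      rw [Complex.exp_add, Complex.exp_add]
      ring
    rw [intervalIntegral.integral_congr (fun x _ => key x)]
    have hint : ∀ κ' : ℤ, IntervalIntegrable
        (fun x : ℝ => (1/2 : ℂ) * ((∏ k ∈ s, (Real.cos ((n k : ℝ) * x) : ℂ)) *
          Complex.exp (-((κ' : ℂ) * x) * Complex.I)))
        MeasureTheory.volume (-Real.pi) Real.pi := by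
      intro κ'
      apply Continuous.intervalIntegrable
      fun_prop
    rw [intervalIntegral.integral_add (hint _) (hint _),
      intervalIntegral.integral_const_mul, intervalIntegral.integral_const_mul]
    have h1 : ∀ ε : ℕ → ℤ, (∀ k ∈ s, ε k = 1 ∨ ε k = -1) →
        κ - (n a : ℤ) ≠ ∑ k ∈ s, ε k * ((n k : ℕ) : ℤ) := by
      intro ε hε hsum
      refine h (Function.update ε a 1) ?_ ?_
      · intro k hk
        rcases Finset.mem_insert.mp hk with rfl | hk
        · left; simp
        · rw [Function.update_of_ne (ne_of_mem_of_not_mem hk ha)]; exact hε k hk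
      · have hcong : ∑ k ∈ s, Function.update ε a 1 k * ((n k : ℕ) : ℤ)
            = ∑ k ∈ s, ε k * ((n k : ℕ) : ℤ) :=
          Finset.sum_congr rfl (fun k hk => by
            rw [Function.update_of_ne (ne_of_mem_of_not_mem hk ha)])
        rw [Finset.sum_insert ha, Function.update_self, hcong, one_mul, ← hsum]; ring
    have h2 : ∀ ε : ℕ → ℤ, (∀ k ∈ s, ε k = 1 ∨ ε k = -1) →
        κ + (n a : ℤ) ≠ ∑ k ∈ s, ε k * ((n k : ℕ) : ℤ) := by
      intro ε hε hsum
      refine h (Function.update ε a (-1)) ?_ ?_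
      · intro k hk
        rcases Finset.mem_insert.mp hk with rfl | hk
        · right; simp
        · rw [Function.update_of_ne (ne_of_mem_of_not_mem hk ha)]; exact hε k hk
      · have hcong : ∑ k ∈ s, Function.update ε a (-1) k * ((n k : ℕ) : ℤ)
            = ∑ k ∈ s, ε k * ((n k : ℕ) : ℤ) :=
          Finset.sum_congr rfl (fun k hk => by
            rw [Function.update_of_ne (ne_of_mem_of_not_mem hk ha)])
        rw [Finset.sum_insert ha, Function.update_self, hcong, neg_one_mul, ← hsum]; ring
    rw [ih _ h1, ih _ h2]
    ring

lemma repBound (T : Finset ℕ) (ε : ℕ → ℤ) (hε : ∀ k ∈ T, ε k = 1 ∨ ε k = -1)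
    (j : ℕ) (hj : j ∈ T) (hmax : ∀ k ∈ T, k ≤ j) :
    2 * 4 ^ j < 3 * |∑ k ∈ T, ε k * 4 ^ k| := by
  have hsplit : ∑ k ∈ T, ε k * 4 ^ k = ε j * 4 ^ j + ∑ k ∈ T.erase j, ε k * 4 ^ k :=
    (Finset.add_sum_erase T _ hj).symm
  have hjabs : |ε j * 4 ^ j| = 4 ^ j := by
    rcases hε j hj with h | h <;>
      simp [h, abs_of_nonneg, pow_nonneg, abs_of_nonpos]
  have herase : |∑ k ∈ T.erase j, ε k * 4 ^ k| ≤ ∑ k ∈ Finset.range j, (4:ℤ) ^ k := by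
    calc |∑ k ∈ T.erase j, ε k * 4 ^ k| ≤ ∑ k ∈ T.erase j, |ε k * 4 ^ k| :=
          Finset.abs_sum_le_sum_abs _ _
      _ = ∑ k ∈ T.erase j, (4:ℤ) ^ k := Finset.sum_congr rfl (fun k hk => by
          rcases hε k (Finset.mem_of_mem_erase hk) with h | h <;>
            simp [h, abs_of_nonneg, pow_nonneg, abs_of_nonpos])
      _ ≤ ∑ k ∈ Finset.range j, (4:ℤ) ^ k := by
          apply Finset.sum_le_sum_of_subset_of_nonneg
          · intro k hk
            exact Finset.mem_range.mpr (lt_of_le_of_ne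
              (hmax k (Finset.mem_of_mem_erase hk)) (Finset.ne_of_mem_erase hk))
          · intro k _ _; positivity
  have hgeom : (∑ k ∈ Finset.range j, (4:ℤ) ^ k) * (4 - 1) = 4 ^ j - 1 := geom_sum_mul 4 j
  have htri := abs_sub_abs_le_abs_sub (ε j * 4 ^ j) (-(∑ k ∈ T.erase j, ε k * 4 ^ k))
  rw [abs_neg, sub_neg_eq_add, ← hsplit] at htri
  linarith

lemma nonrep_zero (T : Finset ℕ) (hT : T.Nonempty) :
    ∀ ε : ℕ → ℤ, (∀ k ∈ T, ε k = 1 ∨ ε k = -1) → (0:ℤ) ≠ ∑ k ∈ T, ε k * (((4:ℕ) ^ k : ℕ) : ℤ) := by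
  intro ε hε hsum
  have hb := repBound T ε hε (T.max' hT) (T.max'_mem hT) (fun k hk => T.le_max' k hk)
  push_cast at hsum
  rw [← hsum] at hb
  simp at hb
  have : (0:ℤ) < 2 * 4 ^ T.max' hT := by positivity
  linarith

/-- Real-valued zero integral for products of cosines. -/
lemma intProdCosReal (n : ℕ → ℕ) (T : Finset ℕ)
    (h : ∀ ε : ℕ → ℤ, (∀ k ∈ T, ε k = 1 ∨ ε k = -1) → (0:ℤ) ≠ ∑ k ∈ T, ε k * ((n k : ℕ) : ℤ)) :
    (∫ x in (-Real.pi)..Real.pi, ∏ k ∈ T, Real.cos ((n k : ℝ) * x)) = 0 := by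
  have key := intProdCos n T 0 h
  have : (∫ x in (-Real.pi)..Real.pi,
      (∏ k ∈ T, (Real.cos ((n k : ℝ) * x) : ℂ))) = 0 := by
    rw [← key]
    apply intervalIntegral.integral_congr
    intro x _
    simp
  rw [show (fun x : ℝ => ∏ k ∈ T, (Real.cos ((n k : ℝ) * x) : ℂ))
      = fun x : ℝ => ((∏ k ∈ T, Real.cos ((n k : ℝ) * x) : ℝ) : ℂ) from
    funext fun x => by push_cast; ring] at this
  rw [intervalIntegral.integral_ofReal] at this
  exact_mod_cast this

lemma riesz_expand (m : ℕ) (x y : ℝ) :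
    rieszProd m (x, y) = ∑ T ∈ (Finset.range (m+1)).powerset,
      (∏ k ∈ T, Real.cos ((4:ℝ) ^ k * x)) * (∏ k ∈ T, Real.cos ((4:ℝ) ^ (m-k) * y)) := by
  simp only [rieszProd]
  calc ∏ k ∈ Finset.range (m+1), (1 + Real.cos ((4:ℝ)^k * (x,y).1) * Real.cos ((4:ℝ)^(m-k) * (x,y).2))
      = ∏ k ∈ Finset.range (m+1),
          (Real.cos ((4:ℝ)^k * x) * Real.cos ((4:ℝ)^(m-k) * y) + 1) :=
        Finset.prod_congr rfl fun k _ => by ring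
    _ = ∑ T ∈ (Finset.range (m+1)).powerset,
        (∏ k ∈ T, Real.cos ((4:ℝ)^k * x) * Real.cos ((4:ℝ)^(m-k) * y)) *
          ∏ k ∈ (Finset.range (m+1)) \ T, (1:ℝ) :=
        Finset.prod_add _ _ _
    _ = _ := by
        refine Finset.sum_congr rfl fun T _ => ?_
        rw [Finset.prod_mul_distrib]
        simp

lemma small_sum (m : ℕ) (x y : ℝ) :
    ∑ T ∈ (Finset.range (m+1)).powerset.filter (fun T => T.card ≤ 1),
      ((∏ k ∈ T, Real.cos ((4:ℝ) ^ k * x)) * (∏ k ∈ T, Real.cos ((4:ℝ) ^ (m-k) * y)))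
    = 1 + ∑ k ∈ Finset.range (m+1), Real.cos ((4:ℝ)^k * x) * Real.cos ((4:ℝ)^(m-k) * y) := by
  have hset : (Finset.range (m+1)).powerset.filter (fun T => T.card ≤ 1)
      = insert ∅ ((Finset.range (m+1)).image (fun k => ({k} : Finset ℕ))) := by
    ext T
    simp only [Finset.mem_filter, Finset.mem_powerset, Finset.mem_insert, Finset.mem_image]
    constructor
    · rintro ⟨hsub, hcard⟩
      rcases Nat.le_one_iff_eq_zero_or_eq_one.mp hcard with h0 | h1
      · exact Or.inl (Finset.card_eq_zero.mp h0)
      · obtain ⟨a, rfl⟩ := Finset.card_eq_one.mp h1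
        exact Or.inr ⟨a, by simpa using hsub, rfl⟩
    · rintro (rfl | ⟨a, ha, rfl⟩)
      · simp
      · exact ⟨Finset.singleton_subset_iff.mpr ha, by simp⟩
  rw [hset, Finset.sum_insert (by simp),
    Finset.sum_image (fun a _ b _ h => Finset.singleton_injective h)]
  simp

lemma diff_expand (m : ℕ) (x y : ℝ) :
    rieszProd m (x, y) - 1 -
      ∑ k ∈ Finset.range (m+1), Real.cos ((4:ℝ)^k * x) * Real.cos ((4:ℝ)^(m-k) * y)
    = ∑ T ∈ (Finset.range (m+1)).powerset.filter (fun T => ¬ T.card ≤ 1),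
        (∏ k ∈ T, Real.cos ((4:ℝ)^k * x)) * (∏ k ∈ T, Real.cos ((4:ℝ)^(m-k) * y)) := by
  have h := Finset.sum_filter_add_sum_filter_not (Finset.range (m+1)).powerset
    (fun T => T.card ≤ 1)
    (fun T => (∏ k ∈ T, Real.cos ((4:ℝ)^k * x)) * (∏ k ∈ T, Real.cos ((4:ℝ)^(m-k) * y)))
  rw [riesz_expand m x y, ← h, small_sum m x y]
  ring

lemma term_zero (m : ℕ) (κ₁ κ₂ : ℤ) (hκ : max |κ₁| 1 * max |κ₂| 1 ≤ (4:ℤ)^m)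
    (T : Finset ℕ) (hsub : T ⊆ Finset.range (m+1)) (hcard : 1 < T.card) :
    (∫ x in (-Real.pi)..Real.pi, (∏ k ∈ T, (Real.cos ((((4:ℕ)^k : ℕ) : ℝ) * x) : ℂ)) *
        Complex.exp (-((κ₁:ℂ) * x) * Complex.I)) *
    (∫ y in (-Real.pi)..Real.pi, (∏ k ∈ T, (Real.cos ((((4:ℕ)^(m-k) : ℕ) : ℝ) * y) : ℂ)) *
        Complex.exp (-((κ₂:ℂ) * y) * Complex.I)) = 0 := by
  by_cases h1 : ∀ ε : ℕ → ℤ, (∀ k ∈ T, ε k = 1 ∨ ε k = -1) →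
      κ₁ ≠ ∑ k ∈ T, ε k * ((((4:ℕ)^k : ℕ) : ℤ))
  · rw [intProdCos _ T κ₁ h1, zero_mul]
  · by_cases h2 : ∀ ε : ℕ → ℤ, (∀ k ∈ T, ε k = 1 ∨ ε k = -1) →
        κ₂ ≠ ∑ k ∈ T, ε k * ((((4:ℕ)^(m-k) : ℕ) : ℤ))
    · rw [intProdCos _ T κ₂ h2, mul_zero]
    · exfalso
      push_neg at h1 h2
      obtain ⟨ε₁, hε₁, hsum₁⟩ := h1
      obtain ⟨ε₂, hε₂, hsum₂⟩ := h2
      have hne : T.Nonempty := Finset.card_pos.mp (by omega)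
      have hij : T.min' hne < T.max' hne := Finset.min'_lt_max'_of_card T hcard
      set j := T.max' hne
      set i := T.min' hne
      have him : i ≤ m := by
        have := hsub (T.min'_mem hne); simp only [Finset.mem_range] at this; omega
      have hb1 : 2 * 4 ^ j < 3 * |κ₁| := by
        have hb := repBound T ε₁ hε₁ j (T.max'_mem hne) (fun k hk => T.le_max' k hk)
        push_cast at hsum₁
        rw [← hsum₁] at hb
        exact hb
      have hb2 : 2 * 4 ^ (m - i) < 3 * |κ₂| := by
        have hinj : ∀ a ∈ T, ∀ b ∈ T, m - a = m - b → a = b := by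
          intro a ha b hb hab
          have ha' := hsub ha; have hb' := hsub hb
          simp only [Finset.mem_range] at ha' hb'
          omega
        have hsum₂' : κ₂ = ∑ k' ∈ T.image (fun k => m - k), ε₂ (m - k') * 4 ^ k' := by
          rw [Finset.sum_image hinj]
          push_cast at hsum₂
          rw [hsum₂]
          refine Finset.sum_congr rfl fun k hk => ?_
          have hkm := hsub hk; simp only [Finset.mem_range] at hkm
          rw [Nat.sub_sub_self (by omega)]
        have hmem : m - i ∈ T.image (fun k => m - k) :=
          Finset.mem_image_of_mem _ (T.min'_mem hne)
        have hmax : ∀ k' ∈ T.image (fun k => m - k), k' ≤ m - i := by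
          intro k' hk'
          obtain ⟨k, hk, rfl⟩ := Finset.mem_image.mp hk'
          exact Nat.sub_le_sub_left (T.min'_le k hk) m
        have hε' : ∀ k' ∈ T.image (fun k => m - k), ε₂ (m - k') = 1 ∨ ε₂ (m - k') = -1 := by
          intro k' hk'
          obtain ⟨k, hk, rfl⟩ := Finset.mem_image.mp hk'
          have hkm := hsub hk; simp only [Finset.mem_range] at hkm
          rw [Nat.sub_sub_self (by omega)]
          exact hε₂ k hk
        have hb := repBound _ (fun k' => ε₂ (m - k')) hε' (m - i) hmem hmax
        rw [← hsum₂'] at hb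
        exact hb
      have hpos1 : (0:ℤ) < |κ₁| := by nlinarith [pow_pos (show (0:ℤ) < 4 by norm_num) j]
      have hpos2 : (0:ℤ) < |κ₂| := by nlinarith [pow_pos (show (0:ℤ) < 4 by norm_num) (m - i)]
      have h1le : (1:ℤ) ≤ |κ₁| := hpos1
      have h2le : (1:ℤ) ≤ |κ₂| := hpos2
      have hprod : |κ₁| * |κ₂| ≤ 4 ^ m := by
        rw [max_eq_left h1le, max_eq_left h2le] at hκ
        exact hκ
      have hpowle : (4:ℤ)^(m+1) ≤ 4^j * 4^(m-i) := by
        rw [← pow_add]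
        exact pow_le_pow_right₀ (by norm_num) (by omega)
      have key : (2*4^j) * (2*4^(m-i)) < (3*|κ₁|) * (3*|κ₂|) :=
        mul_lt_mul' hb1.le hb2 (by positivity) (by positivity)
      have key2 : 4 * ((4:ℤ)^j * 4^(m-i)) < 9 * (|κ₁| * |κ₂|) := by
        calc 4 * ((4:ℤ)^j * 4^(m-i)) = 2*4^j * (2*4^(m-i)) := by ring
          _ < 3*|κ₁| * (3*|κ₂|) := key
          _ = 9 * (|κ₁| * |κ₂|) := by ring
      have hs : (4:ℤ)^(m+1) = 4^m * 4 := pow_succ 4 m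
      linarith [pow_pos (show (0:ℤ) < 4 by norm_num) m]

end Stmt18Aux

open Stmt18Aux

/-- Riesz product identity: `Φ_m ≥ 0`, its mean value over `𝕋^2` equals `1`
(hence `‖Φ_m‖_1 = 1`), and
`Φ_m(x) = 1 + ∑_{k=0}^m cos(4^k x_1)cos(4^{m-k} x_2) + t_m(x)` where all Fourier
coefficients of `t_m` at frequencies in the hyperbolic cross `Γ(4^m)` vanish. -/
theorem stmt18 (m : ℕ) :
    (∀ x : ℝ × ℝ, 0 ≤ rieszProd m x) ∧
    ((2 * Real.pi) ^ (2 : ℕ))⁻¹ *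
      (∫ x in (-Real.pi)..Real.pi, ∫ y in (-Real.pi)..Real.pi, rieszProd m (x, y)) = 1 ∧
    (∀ κ : ℤ × ℤ, max |κ.1| 1 * max |κ.2| 1 ≤ (4 : ℤ) ^ m →
      (∫ x in (-Real.pi)..Real.pi, ∫ y in (-Real.pi)..Real.pi,
        ((rieszProd m (x, y) - 1 - ∑ k ∈ Finset.range (m + 1),
            Real.cos (4 ^ k * x) * Real.cos (4 ^ (m - k) * y) : ℝ) : ℂ) *
          Complex.exp (-((κ.1 : ℂ) * (x : ℂ) + (κ.2 : ℂ) * (y : ℂ)) * Complex.I)) = 0) := by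
  refine ⟨?_, ?_, ?_⟩
  · -- nonnegativity
    intro x
    rw [rieszProd]
    apply Finset.prod_nonneg
    intro k _
    nlinarith [Real.neg_one_le_cos ((4:ℝ)^k * x.1), Real.cos_le_one ((4:ℝ)^k * x.1),
      Real.neg_one_le_cos ((4:ℝ)^(m-k) * x.2), Real.cos_le_one ((4:ℝ)^(m-k) * x.2)]
  · -- mean value
    have hinner : ∀ x : ℝ, (∫ y in (-Real.pi)..Real.pi, rieszProd m (x, y))
        = ∑ T ∈ (Finset.range (m+1)).powerset,
            (∏ k ∈ T, Real.cos ((4:ℝ)^k * x)) *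
              ∫ y in (-Real.pi)..Real.pi, ∏ k ∈ T, Real.cos ((4:ℝ)^(m-k) * y) := by
      intro x
      rw [intervalIntegral.integral_congr
        (g := fun y => ∑ T ∈ (Finset.range (m+1)).powerset,
          (∏ k ∈ T, Real.cos ((4:ℝ)^k * x)) * ∏ k ∈ T, Real.cos ((4:ℝ)^(m-k) * y))
        (fun y _ => riesz_expand m x y)]
      rw [intervalIntegral.integral_finset_sum
        (fun T _ => Continuous.intervalIntegrable (by fun_prop) _ _)]
      exact Finset.sum_congr rfl fun T _ => intervalIntegral.integral_const_mul _ _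
    simp only [hinner]
    rw [intervalIntegral.integral_finset_sum
      (fun T _ => Continuous.intervalIntegrable (by fun_prop) _ _)]
    have hsum := Finset.sum_eq_single_of_mem (s := (Finset.range (m+1)).powerset)
      (f := fun T => ∫ x in (-Real.pi)..Real.pi,
        (∏ k ∈ T, Real.cos ((4:ℝ)^k * x)) *
          ∫ y in (-Real.pi)..Real.pi, ∏ k ∈ T, Real.cos ((4:ℝ)^(m-k) * y))
      ∅ (Finset.empty_mem_powerset _) ?_
    · rw [hsum]
      simp only [Finset.prod_empty, one_mul, mul_one, intervalIntegral.integral_const,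
        smul_eq_mul]
      have hpi : Real.pi ≠ 0 := Real.pi_ne_zero
      field_simp
      ring
    · intro T _ hTne
      rw [intervalIntegral.integral_mul_const]
      have hzero : (∫ x in (-Real.pi)..Real.pi, ∏ k ∈ T, Real.cos ((4:ℝ)^k * x)) = 0 := by
        have hcast : ∀ x : ℝ, (∏ k ∈ T, Real.cos ((4:ℝ)^k * x))
            = ∏ k ∈ T, Real.cos ((((4:ℕ)^k : ℕ) : ℝ) * x) :=
          fun x => Finset.prod_congr rfl fun k _ => by push_cast; ring
        rw [intervalIntegral.integral_congr (fun x _ => hcast x)]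
        exact intProdCosReal (fun k => 4^k) T
          (nonrep_zero T (Finset.nonempty_of_ne_empty hTne))
      rw [hzero, zero_mul]
  · -- Fourier coefficients
    intro κ hκ
    have hpt : ∀ x y : ℝ,
        ((rieszProd m (x, y) - 1 - ∑ k ∈ Finset.range (m + 1),
            Real.cos (4 ^ k * x) * Real.cos (4 ^ (m - k) * y) : ℝ) : ℂ) *
          Complex.exp (-((κ.1 : ℂ) * (x : ℂ) + (κ.2 : ℂ) * (y : ℂ)) * Complex.I)
        = ∑ T ∈ (Finset.range (m+1)).powerset.filter (fun T => ¬ T.card ≤ 1),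
            ((∏ k ∈ T, (Real.cos ((((4:ℕ)^k : ℕ) : ℝ) * x) : ℂ)) *
                Complex.exp (-((κ.1:ℂ) * x) * Complex.I)) *
              ((∏ k ∈ T, (Real.cos ((((4:ℕ)^(m-k) : ℕ) : ℝ) * y) : ℂ)) *
                Complex.exp (-((κ.2:ℂ) * y) * Complex.I)) := by
      intro x y
      rw [diff_expand m x y]
      rw [show Complex.exp (-((κ.1 : ℂ) * (x : ℂ) + (κ.2 : ℂ) * (y : ℂ)) * Complex.I)
          = Complex.exp (-((κ.1:ℂ) * x) * Complex.I) *
              Complex.exp (-((κ.2:ℂ) * y) * Complex.I) by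
        rw [← Complex.exp_add]; congr 1; ring]
      push_cast
      rw [Finset.sum_mul]
      refine Finset.sum_congr rfl fun T _ => ?_
      ring
    have hinner : ∀ x : ℝ,
        (∫ y in (-Real.pi)..Real.pi,
          ((rieszProd m (x, y) - 1 - ∑ k ∈ Finset.range (m + 1),
              Real.cos (4 ^ k * x) * Real.cos (4 ^ (m - k) * y) : ℝ) : ℂ) *
            Complex.exp (-((κ.1 : ℂ) * (x : ℂ) + (κ.2 : ℂ) * (y : ℂ)) * Complex.I))
        = ∑ T ∈ (Finset.range (m+1)).powerset.filter (fun T => ¬ T.card ≤ 1),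
            ((∏ k ∈ T, (Real.cos ((((4:ℕ)^k : ℕ) : ℝ) * x) : ℂ)) *
                Complex.exp (-((κ.1:ℂ) * x) * Complex.I)) *
              ∫ y in (-Real.pi)..Real.pi,
                ((∏ k ∈ T, (Real.cos ((((4:ℕ)^(m-k) : ℕ) : ℝ) * y) : ℂ)) *
                  Complex.exp (-((κ.2:ℂ) * y) * Complex.I)) := by
      intro x
      rw [intervalIntegral.integral_congr (fun y _ => hpt x y)]
      rw [intervalIntegral.integral_finset_sum
        (fun T _ => Continuous.intervalIntegrable (by fun_prop) _ _)]
      exact Finset.sum_congr rfl fun T _ => intervalIntegral.integral_const_mul _ _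
    simp only [hinner]
    rw [intervalIntegral.integral_finset_sum
      (fun T _ => Continuous.intervalIntegrable (by fun_prop) _ _)]
    apply Finset.sum_eq_zero
    intro T hT
    rw [intervalIntegral.integral_mul_const]
    simp only [Finset.mem_filter, Finset.mem_powerset] at hT
    exact term_zero m κ.1 κ.2 hκ T hT.1 (by omega)
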